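/- Let L ≥ 1 and let n_1, …, n_L be integers with n_l ≥ 4 for all l. Then every piecewise affine function f : ℝ → ℝ with at most 2 + Σ_{l=1}^{L} (n_l − 4) linear regions can be computed exactly by a ReLU network of design (1, n_1, …, n_L, 1). -/

import Mathlib

open scoped BigOperators
open MeasureTheory

noncomputable section

/-- The ReLU activation function. -/
def relu (x : ℝ) : ℝ := max x 0

/-- `f : ℝ^n → ℝ^m` is an affine map. -/
def IsAffineMap {n m : ℕ} (f : (Fin n → ℝ) → Fin m → ℝ) : Prop :=
  ∃ (A : Matrix (Fin m) (Fin n) ℝ) (b : Fin m → ℝ),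
    ∀ x i, f x i = (∑ j, A i j * x j) + b i

/-- `f : ℝ^n → ℝ^m` is an affine map all of whose coefficients have absolute value ≤ c. -/
def IsAffineMapB (c : ℝ) {n m : ℕ} (f : (Fin n → ℝ) → Fin m → ℝ) : Prop :=
  ∃ (A : Matrix (Fin m) (Fin n) ℝ) (b : Fin m → ℝ),
    (∀ i j, |A i j| ≤ c) ∧ (∀ i, |b i| ≤ c) ∧ ∀ x i, f x i = (∑ j, A i j * x j) + b i

/-- `ComputesA ρ n hidden m f` : `f` is computed by a feedforward network with activation
function `ρ`, input dimension `n`, hidden layer widths `hidden` and output dimension `m`. -/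
inductive ComputesA (ρ : ℝ → ℝ) :
    ∀ (n : ℕ), List ℕ → ∀ (m : ℕ), ((Fin n → ℝ) → Fin m → ℝ) → Prop
  | nil {n m : ℕ} (f : (Fin n → ℝ) → Fin m → ℝ) (hf : IsAffineMap f) :
      ComputesA ρ n [] m f
  | cons {n w m : ℕ} {ws : List ℕ} (f₀ : (Fin n → ℝ) → Fin w → ℝ)
      (g : (Fin w → ℝ) → Fin m → ℝ) (hf : IsAffineMap f₀)
      (hg : ComputesA ρ w ws m g) :
      ComputesA ρ n (w :: ws) m (fun x => g (fun i => ρ (f₀ x i)))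

/-- Same as `ComputesA` but all coefficients of all affine maps are bounded by `c`. -/
inductive ComputesAB (ρ : ℝ → ℝ) (c : ℝ) :
    ∀ (n : ℕ), List ℕ → ∀ (m : ℕ), ((Fin n → ℝ) → Fin m → ℝ) → Prop
  | nil {n m : ℕ} (f : (Fin n → ℝ) → Fin m → ℝ) (hf : IsAffineMapB c f) :
      ComputesAB ρ c n [] m f
  | cons {n w m : ℕ} {ws : List ℕ} (f₀ : (Fin n → ℝ) → Fin w → ℝ)
      (g : (Fin w → ℝ) → Fin m → ℝ) (hf : IsAffineMapB c f₀)
      (hg : ComputesAB ρ c w ws m g) :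
      ComputesAB ρ c n (w :: ws) m (fun x => g (fun i => ρ (f₀ x i)))

/-- `f` is computed by a ReLU network of design `(n, hidden…, m)`. -/
def Computes (n : ℕ) (hidden : List ℕ) (m : ℕ) (f : (Fin n → ℝ) → Fin m → ℝ) : Prop :=
  ComputesA relu n hidden m f

/-- `R` is a linear region of `f` : an open connected set on which `f` is affine,
maximal in the sense that `f` is not affine on any strictly larger open set. -/
def IsLinearRegion {n m : ℕ} (f : (Fin n → ℝ) → Fin m → ℝ) (R : Set (Fin n → ℝ)) : Prop :=
  IsOpen R ∧ IsConnected R ∧ (∃ g, IsAffineMap g ∧ Set.EqOn f g R) ∧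
    ∀ R' : Set (Fin n → ℝ), IsOpen R' → R ⊂ R' →
      ¬ ∃ g, IsAffineMap g ∧ Set.EqOn f g R'

/-- The number of linear regions of `f`. -/
def numRegions {n m : ℕ} (f : (Fin n → ℝ) → Fin m → ℝ) : ℕ :=
  {R | IsLinearRegion f R}.ncard

/-- `R(n, hidden…, m)` : the maximal number of linear regions of a function computed by a
ReLU network of design `(n, hidden…, m)`. -/
def maxRegions (n : ℕ) (hidden : List ℕ) (m : ℕ) : ℕ :=
  sSup {k | ∃ f : (Fin n → ℝ) → Fin m → ℝ, Computes n hidden m f ∧ numRegions f = k}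

/-- `f` is piecewise affine: continuous, finitely many linear regions, whose closures cover. -/
def IsPiecewiseAffine {n m : ℕ} (f : (Fin n → ℝ) → Fin m → ℝ) : Prop :=
  Continuous f ∧ {R | IsLinearRegion f R}.Finite ∧
    (⋃ R ∈ {R | IsLinearRegion f R}, closure R) = Set.univ

section NetLemmas

lemma relu_sub_relu_neg (x : ℝ) : relu x - relu (-x) = x := by
  unfold relu
  rcases le_total x 0 with h | h
  · rw [max_eq_right h, max_eq_left (by linarith)]; ring
  · rw [max_eq_left h, max_eq_right (by linarith)]; ring

lemma relu_of_nonpos {x : ℝ} (h : x ≤ 0) : relu x = 0 := max_eq_right h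

lemma relu_of_nonneg {x : ℝ} (h : 0 ≤ x) : relu x = x := max_eq_left h

lemma continuous_relu : Continuous relu := continuous_id.max continuous_const

lemma IsAffineMap.comp {n m p : ℕ} {f : (Fin m → ℝ) → Fin p → ℝ}
    {g : (Fin n → ℝ) → Fin m → ℝ} (hf : IsAffineMap f) (hg : IsAffineMap g) :
    IsAffineMap (fun x => f (g x)) := by
  obtain ⟨A, b, hA⟩ := hf
  obtain ⟨B, c, hB⟩ := hg
  refine ⟨fun i k => ∑ j, A i j * B j k, fun i => (∑ j, A i j * c j) + b i, ?_⟩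
  intro x i
  simp only [hA, hB, mul_add, Finset.mul_sum, Finset.sum_add_distrib]
  rw [add_assoc]
  congr 1
  rw [Finset.sum_comm]
  refine Finset.sum_congr rfl fun k _ => ?_
  rw [Finset.sum_mul]
  exact Finset.sum_congr rfl fun j _ => (mul_assoc _ _ _).symm

lemma ComputesA.comp_affine {n m n' : ℕ} {ws : List ℕ} {g : (Fin n → ℝ) → Fin m → ℝ}
    (hg : ComputesA relu n ws m g) (A : (Fin n' → ℝ) → Fin n → ℝ) (hA : IsAffineMap A) :
    ComputesA relu n' ws m (fun x => g (A x)) := by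
  induction hg generalizing n' with
  | nil f hf => exact ComputesA.nil _ (hf.comp hA)
  | cons f₀ g hf hg ih =>
    exact ComputesA.cons (fun x => f₀ (A x)) g (hf.comp hA) hg

end NetLemmas
section Widen

lemma restrict_affine {w w' : ℕ} (h : w ≤ w') :
    IsAffineMap (fun (u : Fin w' → ℝ) (i : Fin w) => u (Fin.castLE h i)) := by
  refine ⟨fun i j => if j = Fin.castLE h i then 1 else 0, 0, ?_⟩
  intro x i
  simp [Finset.sum_ite_eq', Pi.zero_apply]

lemma ComputesA.widen {n m : ℕ} {ws : List ℕ} {g : (Fin n → ℝ) → Fin m → ℝ}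
    (hg : ComputesA relu n ws m g) :
    ∀ ws' : List ℕ, List.Forall₂ (· ≤ ·) ws ws' → ComputesA relu n ws' m g := by
  induction hg with
  | nil f hf =>
    intro ws' hw
    cases hw
    exact ComputesA.nil _ hf
  | @cons n w m ws f₀ g hf hg ih =>
    intro ws' hw
    obtain ⟨w', ws'', hww, hrest⟩ : ∃ w' ws'', ∃ _ : w ≤ w', List.Forall₂ (· ≤ ·) ws ws'' ∧ ws' = w' :: ws'' := by
      cases hw with
      | cons h1 h2 => exact ⟨_, _, h1, h2, rfl⟩
    obtain ⟨hrest, rfl⟩ := hrest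
    have hgr := (ih _ hrest).comp_affine _ (restrict_affine hww)
    set f₀' : (Fin n → ℝ) → Fin w' → ℝ :=
      fun x j => if hj : (j : ℕ) < w then f₀ x ⟨j, hj⟩ else 0 with hf₀'
    have hf₀'aff : IsAffineMap f₀' := by
      obtain ⟨A, b, hA⟩ := hf
      refine ⟨fun j i => if hj : (j : ℕ) < w then A ⟨j, hj⟩ i else 0,
        fun j => if hj : (j : ℕ) < w then b ⟨j, hj⟩ else 0, ?_⟩
      intro x j
      by_cases hj : (j : ℕ) < w <;> simp [hf₀', hj, hA]
    have := ComputesA.cons f₀' _ hf₀'aff hgr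
    have heq : (fun x => (fun u => g fun i => u (Fin.castLE hww i)) fun i => relu (f₀' x i)) =
        fun x => g fun i => relu (f₀ x i) := by
      funext x
      show g (fun i => relu (f₀' x (Fin.castLE hww i))) = g (fun i => relu (f₀ x i))
      have harg : (fun i : Fin w => relu (f₀' x (Fin.castLE hww i))) = fun i => relu (f₀ x i) := by
        funext i
        have hlt : (Fin.castLE hww i : ℕ) < w := i.isLt
        simp [hf₀', hlt]
      rw [harg]
    rwa [heq] at this

end Widen
section NetBuild

/-- The canonical target function computed by our networks. -/
def target (k : ℕ) (a b : ℝ) (c t : Fin k → ℝ) : (Fin 2 → ℝ) → Fin 1 → ℝ :=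
  fun x _ => x 0 + a * x 1 + b + ∑ i, c i * relu (x 1 - t i)

lemma base_net (k : ℕ) (a b : ℝ) (c t : Fin (k + 1) → ℝ) :
    ComputesA relu 2 [k + 4] 1 (target (k + 1) a b c t) := by
  set f₀ : (Fin 2 → ℝ) → Fin (k + 4) → ℝ := fun x =>
    Fin.cons (x 0) (Fin.cons (-(x 0)) (Fin.cons (t 0 - x 1)
      (fun i : Fin (k + 1) => x 1 - t i))) with hf₀
  have hf₀aff : IsAffineMap f₀ := by
    refine ⟨Fin.cons ![1, 0] (Fin.cons ![-1, 0] (Fin.cons ![0, -1] (fun _ => ![0, 1]))),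
      Fin.cons 0 (Fin.cons 0 (Fin.cons (t 0) (fun i => -(t i)))), ?_⟩
    intro x j
    refine Fin.cases ?_ (fun j => ?_) j
    · simp only [hf₀, Fin.cons_zero, Fin.sum_univ_two, Matrix.cons_val_zero,
        Matrix.cons_val_one, Matrix.head_cons]; ring
    refine Fin.cases ?_ (fun j => ?_) j
    · simp only [hf₀, Fin.cons_zero, Fin.cons_succ, Fin.sum_univ_two, Matrix.cons_val_zero,
        Matrix.cons_val_one, Matrix.head_cons]; ring
    refine Fin.cases ?_ (fun j => ?_) j
    · simp only [hf₀, Fin.cons_zero, Fin.cons_succ, Fin.sum_univ_two, Matrix.cons_val_zero,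
        Matrix.cons_val_one, Matrix.head_cons]; ring
    · simp only [hf₀, Fin.cons_zero, Fin.cons_succ, Fin.sum_univ_two, Matrix.cons_val_zero,
        Matrix.cons_val_one, Matrix.head_cons]; ring
  set M : Fin (k + 4) → ℝ := Fin.cons 1 (Fin.cons (-1) (Fin.cons (-a)
    (fun i : Fin (k + 1) => c i + (if i = 0 then a else 0)))) with hM
  set g : (Fin (k + 4) → ℝ) → Fin 1 → ℝ := fun u _ => (∑ j, M j * u j) + (b + a * t 0) with hg
  have hgaff : IsAffineMap g := ⟨fun _ j => M j, fun _ => b + a * t 0, fun x i => rfl⟩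
  have hcomp := ComputesA.cons (ρ := relu) f₀ g hf₀aff (ComputesA.nil (ρ := relu) g hgaff)
  have heq : (fun x => g fun i => relu (f₀ x i)) = target (k + 1) a b c t := by
    funext x i
    show (∑ j, M j * relu (f₀ x j)) + (b + a * t 0) = _
    rw [Fin.sum_univ_succ, Fin.sum_univ_succ, Fin.sum_univ_succ]
    simp only [hM, hf₀, Fin.cons_zero, Fin.cons_succ]
    have hsplit : (∑ i : Fin (k + 1), (c i + if i = 0 then a else 0) * relu (x 1 - t i))
        = (∑ i : Fin (k + 1), c i * relu (x 1 - t i)) + a * relu (x 1 - t 0) := by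
      simp only [add_mul, ite_mul, zero_mul, Finset.sum_add_distrib]
      congr 1
      rw [Finset.sum_ite_eq']
      simp
    rw [hsplit]
    have h1 := relu_sub_relu_neg (x 0)
    have h2 := relu_sub_relu_neg (x 1 - t 0)
    rw [show t 0 - x 1 = -(x 1 - t 0) by ring]
    show _ = x 0 + a * x 1 + b + ∑ i, c i * relu (x 1 - t i)
    linear_combination h1 + a * h2
  rwa [heq] at hcomp

lemma step_net (m k' : ℕ) (ws : List ℕ) (a b : ℝ) (c t : Fin (m + k') → ℝ)
    (h : ComputesA relu 2 ws 1
      (target k' a b (fun i => c (Fin.natAdd m i)) (fun i => t (Fin.natAdd m i)))) :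
    ComputesA relu 2 ((m + 4) :: ws) 1 (target (m + k') a b c t) := by
  set f₀ : (Fin 2 → ℝ) → Fin (m + 4) → ℝ := fun x =>
    Fin.cons (x 0) (Fin.cons (-(x 0)) (Fin.cons (x 1) (Fin.cons (-(x 1))
      (fun i : Fin m => x 1 - t (Fin.castAdd k' i))))) with hf₀
  have hf₀aff : IsAffineMap f₀ := by
    refine ⟨Fin.cons ![1, 0] (Fin.cons ![-1, 0] (Fin.cons ![0, 1] (Fin.cons ![0, -1]
        (fun _ => ![0, 1])))),
      Fin.cons 0 (Fin.cons 0 (Fin.cons 0 (Fin.cons 0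
        (fun i => -(t (Fin.castAdd k' i)))))), ?_⟩
    intro x j
    refine Fin.cases ?_ (fun j => ?_) j
    · simp only [hf₀, Fin.cons_zero, Fin.sum_univ_two, Matrix.cons_val_zero,
        Matrix.cons_val_one, Matrix.head_cons]; ring
    refine Fin.cases ?_ (fun j => ?_) j
    · simp only [hf₀, Fin.cons_zero, Fin.cons_succ, Fin.sum_univ_two, Matrix.cons_val_zero,
        Matrix.cons_val_one, Matrix.head_cons]; ring
    refine Fin.cases ?_ (fun j => ?_) j
    · simp only [hf₀, Fin.cons_zero, Fin.cons_succ, Fin.sum_univ_two, Matrix.cons_val_zero,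
        Matrix.cons_val_one, Matrix.head_cons]; ring
    refine Fin.cases ?_ (fun j => ?_) j
    · simp only [hf₀, Fin.cons_zero, Fin.cons_succ, Fin.sum_univ_two, Matrix.cons_val_zero,
        Matrix.cons_val_one, Matrix.head_cons]; ring
    · simp only [hf₀, Fin.cons_zero, Fin.cons_succ, Fin.sum_univ_two, Matrix.cons_val_zero,
        Matrix.cons_val_one, Matrix.head_cons]; ring
  set W0 : Fin (m + 4) → ℝ := Fin.cons 1 (Fin.cons (-1) (Fin.cons 0 (Fin.cons 0
    (fun i : Fin m => c (Fin.castAdd k' i))))) with hW0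
  set W1 : Fin (m + 4) → ℝ := Fin.cons 0 (Fin.cons 0 (Fin.cons 1 (Fin.cons (-1)
    (fun _ : Fin m => 0)))) with hW1
  set A2 : (Fin (m + 4) → ℝ) → Fin 2 → ℝ :=
    fun u r => if r = 0 then ∑ j, W0 j * u j else ∑ j, W1 j * u j with hA2
  have hA2aff : IsAffineMap A2 := by
    refine ⟨fun r j => if r = 0 then W0 j else W1 j, 0, ?_⟩
    intro u r
    rcases Fin.exists_fin_two.mp ⟨r, rfl⟩ with h | h
    all_goals subst h
    all_goals simp [hA2]
  have hcomp := ComputesA.cons (ρ := relu) f₀ _ hf₀aff (h.comp_affine A2 hA2aff)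
  have hu0 : ∀ x : Fin 2 → ℝ, A2 (fun j => relu (f₀ x j)) 0
      = x 0 + ∑ i : Fin m, c (Fin.castAdd k' i) * relu (x 1 - t (Fin.castAdd k' i)) := by
    intro x
    show (if (0 : Fin 2) = 0 then _ else _) = _
    rw [if_pos rfl]
    rw [Fin.sum_univ_succ, Fin.sum_univ_succ, Fin.sum_univ_succ, Fin.sum_univ_succ]
    simp only [hW0, hf₀, Fin.cons_zero, Fin.cons_succ]
    linear_combination relu_sub_relu_neg (x 0)
  have hu1 : ∀ x : Fin 2 → ℝ, A2 (fun j => relu (f₀ x j)) 1 = x 1 := by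
    intro x
    show (if (1 : Fin 2) = 0 then _ else _) = _
    rw [if_neg (by decide)]
    rw [Fin.sum_univ_succ, Fin.sum_univ_succ, Fin.sum_univ_succ, Fin.sum_univ_succ]
    simp only [hW1, hf₀, Fin.cons_zero, Fin.cons_succ, zero_mul, Finset.sum_const_zero]
    linear_combination relu_sub_relu_neg (x 1)
  have heq : (fun x => (fun u => target k' a b (fun i => c (Fin.natAdd m i))
        (fun i => t (Fin.natAdd m i)) (A2 u)) fun i => relu (f₀ x i))
      = target (m + k') a b c t := by
    funext x i
    show A2 (fun j => relu (f₀ x j)) 0 + a * A2 (fun j => relu (f₀ x j)) 1 + b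
        + (∑ i : Fin k', c (Fin.natAdd m i) * relu (A2 (fun j => relu (f₀ x j)) 1 - t (Fin.natAdd m i)))
      = x 0 + a * x 1 + b + ∑ i : Fin (m + k'), c i * relu (x 1 - t i)
    rw [hu0, hu1, Fin.sum_univ_add]
    ring
  rwa [heq] at hcomp

end NetBuild
lemma net_full : ∀ (ws : List ℕ), ws ≠ [] → (∀ w ∈ ws, 4 ≤ w) →
    ∀ (k : ℕ), k ≤ (ws.map (· - 4)).sum + 1 → ∀ (a b : ℝ) (c t : Fin k → ℝ),
    ComputesA relu 2 ws 1 (target k a b c t) := by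
  intro ws
  induction ws with
  | nil => simp
  | cons w ws ih =>
    intro _ h4 k hk a b c t
    have hw4 : 4 ≤ w := h4 w List.mem_cons_self
    by_cases hws : ws = []
    · subst hws
      have hk' : k ≤ (w - 4) + 1 := by simpa using hk
      rcases Nat.eq_zero_or_pos k with hk0 | hkpos
      · subst hk0
        have hpad : target 0 a b c t = target 1 a b (fun _ => 0) (fun _ => 0) := by
          funext x i; simp [target]
        rw [hpad]
        exact (base_net 0 a b (fun _ => 0) (fun _ => 0)).widen [w]
          (List.Forall₂.cons (by omega) List.Forall₂.nil)
      · obtain ⟨k0, rfl⟩ := Nat.exists_eq_succ_of_ne_zero (Nat.pos_iff_ne_zero.mp hkpos)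
        exact (base_net k0 a b c t).widen [w]
          (List.Forall₂.cons (by omega) List.Forall₂.nil)
    · have hsum : (List.map (· - 4) (w :: ws)).sum = (w - 4) + (ws.map (· - 4)).sum := by
        simp
      rw [hsum] at hk
      obtain ⟨m, k', rfl, hmw, hk''⟩ :
          ∃ m k', k = m + k' ∧ m ≤ w - 4 ∧ k' ≤ (ws.map (· - 4)).sum + 1 :=
        ⟨min k (w - 4), k - min k (w - 4), by omega, by omega, by omega⟩
      have hstep := step_net m k' ws a b c t
        (ih hws (fun v hv => h4 v (List.mem_cons_of_mem _ hv)) k' hk'' a b _ _)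
      exact hstep.widen (w :: ws)
        (List.Forall₂.cons (by omega) (List.forall₂_same.mpr (fun x _ => le_refl x)))
section Analysis

open Filter Topology Set

lemma aff_coeff_eq {a b a' b' x : ℝ}
    (h : ∀ᶠ y in 𝓝 x, a * y + b = a' * y + b') : a = a' ∧ b = b' := by
  obtain ⟨ε, hε, hball⟩ := Metric.eventually_nhds_iff.mp h
  have h1 : a * x + b = a' * x + b' := hball (by simpa using hε)
  have h2 : a * (x + ε / 2) + b = a' * (x + ε / 2) + b' := by
    apply hball
    simp only [Real.dist_eq, add_sub_cancel_left]
    rw [abs_of_pos (by linarith)]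
    linarith
  have ha : a = a' := by
    have h3 : a * (ε / 2) = a' * (ε / 2) := by linarith
    exact mul_right_cancel₀ (by positivity) h3
  exact ⟨ha, by rw [ha] at h1; linarith⟩

lemma affine_on_preconnected {V : Set ℝ} (hV : IsOpen V) (hVc : IsPreconnected V)
    {F : ℝ → ℝ} (h : ∀ x ∈ V, ∃ a b : ℝ, ∀ᶠ y in 𝓝 x, F y = a * y + b)
    {x₀ : ℝ} (hx₀ : x₀ ∈ V) : ∃ a b : ℝ, ∀ x ∈ V, F x = a * x + b := by
  obtain ⟨a, b, hab⟩ := h x₀ hx₀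
  set U : Set ℝ := {x | ∀ᶠ y in 𝓝 x, F y = a * y + b} with hU
  set W : Set ℝ := {x | ∃ a' b' : ℝ, ¬(a' = a ∧ b' = b) ∧ ∀ᶠ y in 𝓝 x, F y = a' * y + b'}
    with hW
  have hUopen : IsOpen U := isOpen_setOf_eventually_nhds
  have hWopen : IsOpen W := by
    rw [isOpen_iff_mem_nhds]
    rintro x ⟨a', b', hne, hev⟩
    have : {z | ∀ᶠ y in 𝓝 z, F y = a' * y + b'} ∈ 𝓝 x :=
      isOpen_setOf_eventually_nhds.mem_nhds hev
    exact Filter.mem_of_superset this (fun z hz => ⟨a', b', hne, hz⟩)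
  have hdisj : Disjoint U W := by
    rw [Set.disjoint_left]
    rintro x hxU ⟨a', b', hne, hev⟩
    exact hne (And.comm.mp (aff_coeff_eq ((hev.and hxU).mono (fun y hy => hy.1 ▸ hy.2)))).symm
  have hsub : V ⊆ U ∪ W := by
    intro x hx
    obtain ⟨a', b', hev⟩ := h x hx
    by_cases hcase : a' = a ∧ b' = b
    · left; obtain ⟨rfl, rfl⟩ := hcase; exact hev
    · right; exact ⟨a', b', hcase, hev⟩
  have hVU : V ⊆ U :=
    hVc.subset_left_of_subset_union hUopen hWopen hdisj hsub ⟨x₀, hx₀, hab⟩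
  exact ⟨a, b, fun x hx => (hVU hx).self_of_nhds⟩

lemma repr_aux : ∀ (k : ℕ) (S : Finset ℝ) (_ : S.card = k) (F : ℝ → ℝ) (_ : Continuous F)
    (_ : ∀ x ∉ S, ∃ a b : ℝ, ∀ᶠ y in 𝓝 x, F y = a * y + b),
    ∃ (a b : ℝ) (c t : Fin k → ℝ), ∀ x, F x = a * x + b + ∑ i, c i * relu (x - t i) := by
  intro k
  induction k with
  | zero =>
    intro S hS F hF h
    rw [Finset.card_eq_zero] at hS
    subst hS
    obtain ⟨a, b, hab⟩ := affine_on_preconnected isOpen_univ isPreconnected_univ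
      (fun x _ => h x (by simp)) (Set.mem_univ 0)
    exact ⟨a, b, Fin.elim0, Fin.elim0, fun x => by simpa using hab x (Set.mem_univ x)⟩
  | succ k ih =>
    intro S hS F hF h
    have hSne : S.Nonempty := Finset.card_pos.mp (by omega)
    set tmax := S.max' hSne with htmax
    -- F is affine on `Ioi tmax`
    obtain ⟨a, b, hab⟩ : ∃ a b : ℝ, ∀ y ∈ Set.Ioi tmax, F y = a * y + b := by
      refine affine_on_preconnected isOpen_Ioi isPreconnected_Ioi
        (fun x hx => h x (fun hxS => absurd (S.le_max' x hxS) (not_le.mpr hx)))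
        (x₀ := tmax + 1) (by simp)
    -- choose s₀ < tmax with no point of S in (s₀, tmax)
    set S' := S.erase tmax with hS'
    have hS'card : S'.card = k := by
      rw [hS', Finset.card_erase_of_mem (S.max'_mem hSne), hS]
      omega
    set s₀ : ℝ := if hne : S'.Nonempty then S'.max' hne else tmax - 1 with hs₀
    have hs₀lt : s₀ < tmax := by
      rw [hs₀]
      split_ifs with hne
      · rcases Finset.mem_erase.mp (S'.max'_mem hne) with ⟨hne2, hmem⟩
        exact lt_of_le_of_ne (S.le_max' _ hmem) hne2
      · linarith
    have hgap : ∀ y ∈ Set.Ioo s₀ tmax, y ∉ S := by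
      rintro y ⟨hy1, hy2⟩ hyS
      have hyS' : y ∈ S' := Finset.mem_erase.mpr ⟨ne_of_lt hy2, hyS⟩
      have hne : S'.Nonempty := ⟨y, hyS'⟩
      rw [hs₀, dif_pos hne] at hy1
      exact absurd (S'.le_max' y hyS') (not_le.mpr hy1)
    obtain ⟨a', b', hab'⟩ : ∃ a b : ℝ, ∀ y ∈ Set.Ioo s₀ tmax, F y = a * y + b := by
      refine affine_on_preconnected isOpen_Ioo isPreconnected_Ioo
        (fun x hx => h x (hgap x hx)) (x₀ := (s₀ + tmax) / 2) ?_
      constructor <;> [linarith; linarith]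
    -- continuity at tmax
    have hFt_right : F tmax = a * tmax + b := by
      have l1 : Tendsto F (𝓝[>] tmax) (𝓝 (F tmax)) :=
        (hF.tendsto tmax).mono_left nhdsWithin_le_nhds
      have l2 : Tendsto (fun y => a * y + b) (𝓝[>] tmax) (𝓝 (a * tmax + b)) :=
        ((continuous_const.mul continuous_id).add continuous_const).tendsto tmax
          |>.mono_left nhdsWithin_le_nhds
      refine tendsto_nhds_unique (l1.congr' ?_) l2
      filter_upwards [self_mem_nhdsWithin] with y hy using hab y hy
    have hFt_left : F tmax = a' * tmax + b' := by
      have l1 : Tendsto F (𝓝[<] tmax) (𝓝 (F tmax)) :=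
        (hF.tendsto tmax).mono_left nhdsWithin_le_nhds
      have l2 : Tendsto (fun y => a' * y + b') (𝓝[<] tmax) (𝓝 (a' * tmax + b')) :=
        ((continuous_const.mul continuous_id).add continuous_const).tendsto tmax
          |>.mono_left nhdsWithin_le_nhds
      refine tendsto_nhds_unique (l1.congr' ?_) l2
      filter_upwards [Ioo_mem_nhdsLT_of_mem (Set.right_mem_Ioc.mpr hs₀lt)] with y hy
        using hab' y hy
    set c₀ := a - a' with hc₀
    set H : ℝ → ℝ := fun x => F x - c₀ * relu (x - tmax) with hH
    have hHcont : Continuous H :=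
      hF.sub (continuous_const.mul (continuous_relu.comp (continuous_id.sub continuous_const)))
    have hright : ∀ y ∈ Set.Ioi tmax, H y = a' * y + (b + c₀ * tmax) := by
      intro y hy
      rw [hH]
      simp only
      rw [hab y hy, relu_of_nonneg (by simp at hy; linarith)]
      ring
    have hHloc : ∀ x ∉ S', ∃ α β : ℝ, ∀ᶠ y in 𝓝 x, H y = α * y + β := by
      intro x hx
      rcases lt_trichotomy x tmax with hlt | heq | hgt
      · by_cases hxS : x ∈ S
        · -- then x = tmax, contradiction with hlt  (x ∈ S, x ∉ S' means x = tmax)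
          exact absurd (Finset.mem_erase.mpr ⟨ne_of_lt hlt, hxS⟩) hx
        · obtain ⟨α, β, hev⟩ := h x hxS
          refine ⟨α, β, ?_⟩
          filter_upwards [hev, Iio_mem_nhds hlt] with y hy1 hy2
          rw [hH]
          simp only
          rw [relu_of_nonpos (by simp at hy2; linarith), hy1]
          ring
      · subst heq
        refine ⟨a', b', ?_⟩
        filter_upwards [Ioi_mem_nhds hs₀lt] with y hy
        rcases lt_trichotomy y tmax with h1 | h1 | h1
        · rw [hH]; simp only
          rw [relu_of_nonpos (by linarith), hab' y ⟨hy, h1⟩]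
          ring
        · rw [hH]; simp only
          rw [h1, show tmax - tmax = 0 by ring, relu_of_nonpos le_rfl, hFt_left]
          ring
        · rw [hright y h1]
          have : b + c₀ * tmax = b' := by
            rw [hc₀]
            linear_combination hFt_left - hFt_right
          rw [this]
      · refine ⟨a', b + c₀ * tmax, ?_⟩
        filter_upwards [Ioi_mem_nhds hgt] with y hy using hright y hy
    obtain ⟨α, β, c, t, hrep⟩ := ih S' hS'card H hHcont hHloc
    refine ⟨α, β, Fin.snoc c c₀, Fin.snoc t tmax, ?_⟩
    intro x
    rw [Fin.sum_univ_castSucc]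
    simp only [Fin.snoc_castSucc, Fin.snoc_last]
    have := hrep x
    rw [hH] at this
    simp only at this
    linarith [this]

end Analysis
section Regions

open Set

lemma regions_structure (𝓡 : Set (Set ℝ)) (hfin : 𝓡.Finite)
    (hconn : ∀ Q ∈ 𝓡, IsPreconnected Q)
    (hcover : (⋃ Q ∈ 𝓡, closure Q) = Set.univ) :
    ∃ S : Set ℝ, S.Finite ∧ S.ncard + 1 ≤ 𝓡.ncard ∧ ∀ x ∉ S, ∃ Q ∈ 𝓡, x ∈ Q := by
  classical
  set S : Set ℝ := {x | ∀ Q ∈ 𝓡, x ∉ Q} with hS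
  have key1 : ∀ s : ℝ, ∃ Q, s ∈ S → Q ∈ 𝓡 ∧ Q ⊆ Set.Iio s ∧ s ∈ closure Q := by
    intro s
    by_cases hs : s ∈ S
    swap
    · exact ⟨∅, fun h => absurd h hs⟩
    suffices h : ∃ Q, Q ∈ 𝓡 ∧ Q ⊆ Set.Iio s ∧ s ∈ closure Q by
      obtain ⟨Q, hQ⟩ := h; exact ⟨Q, fun _ => hQ⟩
    have hIio : Set.Iio s ⊆ ⋃ Q ∈ 𝓡, (closure Q ∩ Set.Iio s) := by
      intro x hx
      have hx2 : x ∈ ⋃ Q ∈ 𝓡, closure Q := hcover ▸ Set.mem_univ x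
      obtain ⟨Q, hQ, hxQ⟩ := Set.mem_iUnion₂.mp hx2
      exact Set.mem_iUnion₂.mpr ⟨Q, hQ, hxQ, hx⟩
    have h1 : s ∈ closure (Set.Iio s) := by
      rw [closure_Iio]; exact Set.self_mem_Iic
    have h2 : s ∈ ⋃ Q ∈ 𝓡, closure (closure Q ∩ Set.Iio s) := by
      rw [← Set.Finite.closure_biUnion hfin]
      exact closure_mono hIio h1
    obtain ⟨Q, hQ𝓡, hsQ⟩ := Set.mem_iUnion₂.mp h2
    have hsclQ : s ∈ closure Q := by
      have := closure_mono (Set.inter_subset_left (t := Set.Iio s)) hsQ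
      rwa [closure_closure] at this
    obtain ⟨y, hycl, hys⟩ : ∃ y ∈ closure Q, y < s := by
      rcases (closure Q ∩ Set.Iio s).eq_empty_or_nonempty with he | hne
      · rw [he, closure_empty] at hsQ; exact absurd hsQ (Set.notMem_empty s)
      · obtain ⟨y, hy⟩ := hne; exact ⟨y, hy.1, hy.2⟩
    obtain ⟨z, hzQ, hzs⟩ : ∃ z ∈ Q, z < s := by
      by_contra hno
      push_neg at hno
      have hsub : closure Q ⊆ Set.Ici s := closure_minimal (fun z hz => hno z hz) isClosed_Ici
      exact absurd (hsub hycl) (not_le.mpr hys)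
    refine ⟨Q, hQ𝓡, ?_, hsclQ⟩
    intro w hw
    by_contra hws
    rw [Set.mem_Iio, not_lt] at hws
    have hsQ' : s ∈ Q :=
      (hconn Q hQ𝓡).ordConnected.out hzQ hw ⟨le_of_lt hzs, hws⟩
    exact hs Q hQ𝓡 hsQ'
  obtain ⟨Qtop, hQtop𝓡, hQtopub⟩ : ∃ Q ∈ 𝓡, ¬ BddAbove Q := by
    by_contra hno
    push_neg at hno
    have : BddAbove (⋃ Q ∈ 𝓡, closure Q) :=
      (Set.Finite.bddAbove_biUnion hfin).mpr (fun Q hQ => (hno Q hQ).closure)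
    rw [hcover] at this
    exact not_bddAbove_univ this
  choose φ hφ using key1
  have hmaps : ∀ s ∈ S, φ s ∈ 𝓡 \ {Qtop} := by
    intro s hs
    obtain ⟨h1, h2, h3⟩ := hφ s hs
    refine ⟨h1, ?_⟩
    intro heq
    simp only [Set.mem_singleton_iff] at heq
    exact hQtopub (heq ▸ (bddAbove_Iio.mono h2))
  have hinj : Set.InjOn φ S := by
    have hle : ∀ s ∈ S, ∀ s' ∈ S, φ s = φ s' → s' ≤ s := by
      intro s hs s' hs' heq
      obtain ⟨_, h2, _⟩ := hφ s hs
      obtain ⟨_, _, h3'⟩ := hφ s' hs'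
      have : s' ∈ closure (Set.Iio s) := closure_mono h2 (heq ▸ h3')
      rwa [closure_Iio, Set.mem_Iic] at this
    intro s hs s' hs' heq
    exact le_antisymm (hle s' hs' s hs heq.symm) (hle s hs s' hs' heq)
  have htfin : (𝓡 \ {Qtop}).Finite := hfin.diff
  have hSfin : S.Finite := by
    refine Set.Finite.of_finite_image ?_ hinj
    exact htfin.subset (Set.image_subset_iff.mpr (fun s hs => hmaps s hs))
  refine ⟨S, hSfin, ?_, ?_⟩
  · have h1 : S.ncard ≤ (𝓡 \ {Qtop}).ncard := Set.ncard_le_ncard_of_injOn φ hmaps hinj htfin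
    have h2 : (𝓡 \ {Qtop}).ncard = 𝓡.ncard - 1 := by
      have := Set.ncard_diff_singleton_of_mem hQtop𝓡
      simpa using this
    have h3 : 0 < 𝓡.ncard := (Set.ncard_pos hfin).mpr ⟨Qtop, hQtop𝓡⟩
    omega
  · intro x hx
    rw [hS, Set.mem_setOf_eq] at hx
    push_neg at hx
    obtain ⟨Q, hQ, hxQ⟩ := hx
    exact ⟨Q, hQ, hxQ⟩

end Regions
section Main

open Set Filter Topology

/-- The evaluation homeomorphism `(Fin 1 → ℝ) ≃ₜ ℝ`. -/
def e1 : (Fin 1 → ℝ) ≃ₜ ℝ where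
  toFun := fun x => x 0
  invFun := fun y _ => y
  left_inv := by
    intro x; funext j
    have : j = 0 := Subsingleton.elim j 0
    rw [this]
  right_inv := fun y => rfl
  continuous_toFun := continuous_apply 0
  continuous_invFun := continuous_pi fun _ => continuous_id

theorem stmt_9' (L : ℕ) (hL : 1 ≤ L) (n : Fin L → ℕ) (hn : ∀ l, 4 ≤ n l)
    (f : (Fin 1 → ℝ) → Fin 1 → ℝ) (hf : IsPiecewiseAffine f)
    (hreg : numRegions f ≤ 2 + ∑ l, (n l - 4)) :
    Computes 1 (List.ofFn n) 1 f := by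
  classical
  obtain ⟨hcont, hfin, hcover⟩ := hf
  set 𝓡 : Set (Set ℝ) := (Set.image e1) '' {R | IsLinearRegion f R} with h𝓡
  have hfin' : 𝓡.Finite := hfin.image _
  have hconn : ∀ Q ∈ 𝓡, IsPreconnected Q := by
    rintro Q ⟨R, hR, rfl⟩
    exact (hR.2.1.image e1 e1.continuous.continuousOn).isPreconnected
  have hcover' : (⋃ Q ∈ 𝓡, closure Q) = Set.univ := by
    rw [h𝓡, Set.biUnion_image]
    have : ∀ R : Set (Fin 1 → ℝ), closure (e1 '' R) = e1 '' closure R :=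
      fun R => (Homeomorph.image_closure e1 R).symm
    calc (⋃ R ∈ {R | IsLinearRegion f R}, closure (e1 '' R))
        = ⋃ R ∈ {R | IsLinearRegion f R}, e1 '' closure R := by
          refine Set.iUnion₂_congr fun R _ => this R
      _ = e1 '' ⋃ R ∈ {R | IsLinearRegion f R}, closure R := by
          rw [Set.image_iUnion₂]
      _ = Set.univ := by rw [hcover, Set.image_univ, e1.surjective.range_eq]
  obtain ⟨S, hSfin, hScard, hSloc⟩ := regions_structure 𝓡 hfin' hconn hcover'
  set F : ℝ → ℝ := fun y => f (fun _ => y) 0 with hFdef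
  have hfeq : ∀ (x : Fin 1 → ℝ) (i : Fin 1), f x i = F (x 0) := by
    intro x i
    have h1 : i = 0 := Subsingleton.elim i 0
    have h2 : (fun _ : Fin 1 => x 0) = x := by
      funext j
      have : j = 0 := Subsingleton.elim j 0
      rw [this]
    rw [h1, hFdef]
    simp only
    rw [h2]
  have hFcont : Continuous F :=
    (continuous_apply 0).comp (hcont.comp (continuous_pi fun _ => continuous_id))
  have hFloc : ∀ x ∉ hSfin.toFinset, ∃ a b : ℝ, ∀ᶠ y in 𝓝 x, F y = a * y + b := by
    intro x hx
    rw [Set.Finite.mem_toFinset] at hx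
    obtain ⟨Q, hQ𝓡, hxQ⟩ := hSloc x hx
    obtain ⟨R, hR, rfl⟩ := hQ𝓡
    obtain ⟨g, ⟨A, bb, hAg⟩, hfg⟩ := hR.2.2.1
    refine ⟨A 0 0, bb 0, ?_⟩
    have hopen : IsOpen (e1 '' R) := e1.isOpenMap R hR.1
    filter_upwards [hopen.mem_nhds hxQ] with y hy
    obtain ⟨z, hzR, rfl⟩ := hy
    have h1 : F (e1 z) = f z 0 := by
      rw [hFdef]
      simp only
      congr 1
      funext j
      have : j = 0 := Subsingleton.elim j 0
      rw [this]
      rfl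
    rw [h1, hfg hzR, hAg]
    rw [Fin.sum_univ_one]
    rfl
  have hnum : numRegions f = 𝓡.ncard :=
    (Set.ncard_image_of_injective _ (Set.image_injective.mpr e1.injective)).symm
  obtain ⟨a, b, c, t, hrep⟩ := repr_aux hSfin.toFinset.card hSfin.toFinset rfl F hFcont hFloc
  have hkbound : hSfin.toFinset.card ≤ ((List.ofFn n).map (· - 4)).sum + 1 := by
    have h1 : hSfin.toFinset.card = S.ncard := (Set.ncard_eq_toFinset_card S hSfin).symm
    have h2 : ((List.ofFn n).map (· - 4)).sum = ∑ l, (n l - 4) := by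
      rw [List.map_ofFn, List.sum_ofFn]
      rfl
    rw [hnum] at hreg
    omega
  have hne : List.ofFn n ≠ [] := by
    intro h
    have := congrArg List.length h
    simp only [List.length_ofFn, List.length_nil] at this
    omega
  have h4 : ∀ w ∈ List.ofFn n, 4 ≤ w := by
    intro w hw
    rw [List.mem_ofFn] at hw
    obtain ⟨l, rfl⟩ := hw
    exact hn l
  have hnet := net_full (List.ofFn n) hne h4 _ hkbound a b c t
  set A : (Fin 1 → ℝ) → Fin 2 → ℝ := fun x i => if i = 0 then 0 else x 0 with hA
  have hAaff : IsAffineMap A := by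
    refine ⟨fun i _ => if i = 0 then 0 else 1, fun _ => 0, ?_⟩
    intro x i
    refine Fin.cases ?_ (fun i => ?_) i <;>
      simp [hA, Fin.sum_univ_one]
  have hfinal := hnet.comp_affine A hAaff
  have heq : (fun x => target hSfin.toFinset.card a b c t (A x)) = f := by
    funext x i
    rw [hfeq x i, hrep (x 0)]
    show A x 0 + a * A x 1 + b + ∑ i2, c i2 * relu (A x 1 - t i2) = _
    have h0 : A x 0 = 0 := by simp [hA]
    have h1 : A x 1 = x 0 := by simp [hA]
    rw [h0, h1]
    ring
  rwa [heq] at hfinal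

end Main

/-- if `n_l ≥ 4` for all `l`, every piecewise affine `f : ℝ → ℝ` with at most
`2 + ∑ (n_l - 4)` linear regions is computed by a ReLU network of design `(1, n₁, …, n_L, 1)`. -/
theorem stmt_9 (L : ℕ) (hL : 1 ≤ L) (n : Fin L → ℕ) (hn : ∀ l, 4 ≤ n l)
    (f : (Fin 1 → ℝ) → Fin 1 → ℝ) (hf : IsPiecewiseAffine f)
    (hreg : numRegions f ≤ 2 + ∑ l, (n l - 4)) :
    Computes 1 (List.ofFn n) 1 f := by
  exact stmt_9' L hL n hn f hf hreg
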